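/- Let 𝒜 be an abelian category with all small coproducts (AB3) in which filtered colimits are exact (AB5): for every small filtered category J, the colimit functor colim : (J ⥤ 𝒜) ⥤ 𝒜 preserves finite limits. Then for every type X, the coproduct functor colim : (Discrete X ⥤ 𝒜) ⥤ 𝒜 preserves finite limits. In particular 𝒜 satisfies AB4: for any two families A, B : X → 𝒜 and any family of monomorphisms η_x : A x ⟶ B x, the induced map ⨁_{x : X} A x ⟶ ⨁_{x : X} B x is a monomorphism. -/
import Mathlib

open CategoryTheory CategoryTheory.Limits

theorem stmt_9 (𝒜 : Type u) [Category.{v} 𝒜] [Abelian 𝒜]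
    [HasCoproducts.{w} 𝒜]
    (AB5 : ∀ (J : Type w) [SmallCategory J] [IsFiltered J]
      [HasColimitsOfShape J 𝒜],
      PreservesFiniteLimits (colim : (J ⥤ 𝒜) ⥤ 𝒜)) :
    (∀ X : Type w,
      PreservesFiniteLimits (colim : (Discrete X ⥤ 𝒜) ⥤ 𝒜)) ∧
    (∀ (X : Type w) (A B : X → 𝒜) (η : ∀ x : X, A x ⟶ B x),
      (∀ x : X, Mono (η x)) → Mono (Limits.Sigma.map η)) := by
  haveI : HasColimitsOfSize.{w, w} 𝒜 := has_colimits_of_hasCoequalizers_and_coproducts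
  have main : ∀ X : Type w, PreservesFiniteLimits (colim : (Discrete X ⥤ 𝒜) ⥤ 𝒜) := by
    intro X
    haveI : HasFiniteBiproducts 𝒜 := HasFiniteBiproducts.of_hasFiniteProducts
    haveI := AB5 (Finset (Discrete X))
    letI : PreservesFiniteLimits (CoproductsFromFiniteFiltered.liftToFinset 𝒜 X) :=
      preservesFiniteLimits_liftToFinset 𝒜
    letI : PreservesFiniteLimits
        (CoproductsFromFiniteFiltered.liftToFinset 𝒜 X ⋙ colim) :=
      comp_preservesFiniteLimits _ _
    exact preservesFiniteLimits_of_natIso CoproductsFromFiniteFiltered.liftToFinsetColimIso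
  refine ⟨main, fun X A B η hη => ?_⟩
  haveI := main X
  haveI : ∀ j : Discrete X, Mono ((Discrete.natTrans (fun x => η x.as) :
      Discrete.functor A ⟶ Discrete.functor B).app j) := fun j => hη j.as
  haveI : Mono (Discrete.natTrans (fun x => η x.as) :
      Discrete.functor A ⟶ Discrete.functor B) := NatTrans.mono_of_mono_app _
  haveI : Mono (colimMap (Discrete.natTrans (fun x => η x.as) :
      Discrete.functor A ⟶ Discrete.functor B)) :=
    (colim : (Discrete X ⥤ 𝒜) ⥤ 𝒜).map_mono _
  exact this
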